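/- Let ℓ : X × Y → ℝ^d be biaffine with X ⊆ ℝ^n, Y ⊆ ℝ^m convex and compact, and S ⊆ ℝ^d a closed convex set. If S is halfspace-satisfiable, then S is response-satisfiable. -/

import Mathlib

open Finset Set

section Aux

variable {n d : ℕ} {X : Set (Fin n → ℝ)}

/-- Jensen equality: an affine-on-`X` map sends center of mass to center of mass. -/
lemma aff_centerMass (hXc : Convex ℝ X)
    (f : (Fin n → ℝ) → (Fin d → ℝ))
    (haff : ∀ a b : ℝ, 0 ≤ a → 0 ≤ b → a + b = 1 → ∀ x₁ ∈ X, ∀ x₂ ∈ X,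
      f (a • x₁ + b • x₂) = a • f x₁ + b • f x₂)
    {ι : Type*} (t : Finset ι) (w : ι → ℝ) (p : ι → Fin n → ℝ)
    (hw0 : ∀ i ∈ t, 0 ≤ w i) (hpos : 0 < ∑ i ∈ t, w i) (hp : ∀ i ∈ t, p i ∈ X) :
    f (t.centerMass w p) = t.centerMass w (fun i => f (p i)) := by
  funext j
  have hcv : ConvexOn ℝ X (fun x => f x j) := by
    refine ⟨hXc, fun x hx y hy a b ha hb hab => ?_⟩
    simp only []
    rw [show f (a • x + b • y) = a • f x + b • f y from haff a b ha hb hab x hx y hy]; simp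
  have hcc : ConcaveOn ℝ X (fun x => f x j) := by
    refine ⟨hXc, fun x hx y hy a b ha hb hab => ?_⟩
    simp only []
    rw [show f (a • x + b • y) = a • f x + b • f y from haff a b ha hb hab x hx y hy]; simp
  have h1 := hcv.map_centerMass_le hw0 hpos hp
  have h2 := hcc.le_map_centerMass hw0 hpos hp
  have hle : (fun x => f x j) (t.centerMass w p) = t.centerMass w (fun i => f (p i) j) :=
    le_antisymm h1 h2
  have : (t.centerMass w (fun i => f (p i))) j = t.centerMass w (fun i => f (p i) j) := by
    simp [Finset.centerMass, Finset.sum_apply]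
  rw [this]; exact hle

/-- Two convex combinations (with equal positive total mass) of points of `X`
representing the same point have the same `f`-combination. -/
lemma aff_sum_eq (hXc : Convex ℝ X)
    (f : (Fin n → ℝ) → (Fin d → ℝ))
    (haff : ∀ a b : ℝ, 0 ≤ a → 0 ≤ b → a + b = 1 → ∀ x₁ ∈ X, ∀ x₂ ∈ X,
      f (a • x₁ + b • x₂) = a • f x₁ + b • f x₂)
    {ι : Type*} (t : Finset ι) (w₁ w₂ : ι → ℝ) (p₁ p₂ : ι → Fin n → ℝ)
    (hw₁0 : ∀ i ∈ t, 0 ≤ w₁ i) (hw₂0 : ∀ i ∈ t, 0 ≤ w₂ i)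
    (hsum : ∑ i ∈ t, w₁ i = ∑ i ∈ t, w₂ i) (hpos : 0 < ∑ i ∈ t, w₁ i)
    (hp₁ : ∀ i ∈ t, p₁ i ∈ X) (hp₂ : ∀ i ∈ t, p₂ i ∈ X)
    (heq : ∑ i ∈ t, w₁ i • p₁ i = ∑ i ∈ t, w₂ i • p₂ i) :
    ∑ i ∈ t, w₁ i • f (p₁ i) = ∑ i ∈ t, w₂ i • f (p₂ i) := by
  have hcm : t.centerMass w₁ p₁ = t.centerMass w₂ p₂ := by
    simp only [Finset.centerMass, heq, hsum]
  have e1 := aff_centerMass hXc f haff t w₁ p₁ hw₁0 hpos hp₁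
  have e2 := aff_centerMass hXc f haff t w₂ p₂ hw₂0 (hsum ▸ hpos) hp₂
  have : t.centerMass w₁ (fun i => f (p₁ i)) = t.centerMass w₂ (fun i => f (p₂ i)) := by
    rw [← e1, ← e2, hcm]
  simp only [Finset.centerMass, hsum] at this
  have hT : (∑ i ∈ t, w₂ i) ≠ 0 := by rw [← hsum]; exact hpos.ne'
  have := congrArg (fun v => (∑ i ∈ t, w₂ i) • v) this
  simpa [smul_smul, mul_inv_cancel₀ hT] using this


/-- Affinity for arbitrary (possibly signed) affine combinations inside `X`. -/
lemma aff_comb (hXc : Convex ℝ X)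
    (f : (Fin n → ℝ) → (Fin d → ℝ))
    (haff : ∀ a b : ℝ, 0 ≤ a → 0 ≤ b → a + b = 1 → ∀ x₁ ∈ X, ∀ x₂ ∈ X,
      f (a • x₁ + b • x₂) = a • f x₁ + b • f x₂)
    {ι : Type*} (t : Finset ι) (c : ι → ℝ) (q : ι → Fin n → ℝ)
    (hq : ∀ i ∈ t, q i ∈ X) {x x₀ : Fin n → ℝ} (hx : x ∈ X) (hx₀ : x₀ ∈ X)
    (hrep : x = x₀ + ∑ i ∈ t, c i • (q i - x₀)) :
    f x = f x₀ + ∑ i ∈ t, c i • (f (q i) - f x₀) := by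
  classical
  set pos : ι → ℝ := fun i => max (c i) 0 with hposdef
  set neg : ι → ℝ := fun i => max (-c i) 0 with hnegdef
  have hpos0 : ∀ i, 0 ≤ pos i := fun i => le_max_right _ _
  have hneg0 : ∀ i, 0 ≤ neg i := fun i => le_max_right _ _
  have hpn : ∀ i, pos i - neg i = c i := by
    intro i
    rcases le_total 0 (c i) with h | h
    · simp [hposdef, hnegdef, max_eq_left h, max_eq_right (neg_nonpos.mpr h)]
    · simp [hposdef, hnegdef, max_eq_right h, max_eq_left (neg_nonneg.mpr h)]
  have hsplitE : ∀ (v : ι → Fin n → ℝ) (v₀ : Fin n → ℝ),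
      ∑ i ∈ t, c i • (v i - v₀) =
        ∑ i ∈ t, pos i • v i - ∑ i ∈ t, neg i • v i
          - (∑ i ∈ t, pos i) • v₀ + (∑ i ∈ t, neg i) • v₀ := by
    intro v v₀
    rw [Finset.sum_smul, Finset.sum_smul, ← Finset.sum_sub_distrib,
      ← Finset.sum_sub_distrib, ← Finset.sum_add_distrib]
    refine Finset.sum_congr rfl fun i _ => ?_
    rw [← hpn i]; module
  have hsplitF : ∀ (v : ι → Fin d → ℝ) (v₀ : Fin d → ℝ),
      ∑ i ∈ t, c i • (v i - v₀) =
        ∑ i ∈ t, pos i • v i - ∑ i ∈ t, neg i • v i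
          - (∑ i ∈ t, pos i) • v₀ + (∑ i ∈ t, neg i) • v₀ := by
    intro v v₀
    rw [Finset.sum_smul, Finset.sum_smul, ← Finset.sum_sub_distrib,
      ← Finset.sum_sub_distrib, ← Finset.sum_add_distrib]
    refine Finset.sum_congr rfl fun i _ => ?_
    rw [← hpn i]; module
  set t' : Finset (Bool ⊕ ι) := (Finset.univ : Finset Bool).disjSum t with ht'
  set w₁ : Bool ⊕ ι → ℝ := Sum.elim (fun b => if b then ∑ i ∈ t, pos i else 1) neg with hw₁
  set w₂ : Bool ⊕ ι → ℝ := Sum.elim (fun b => if b then 1 + ∑ i ∈ t, neg i else 0) pos with hw₂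
  set p₁ : Bool ⊕ ι → (Fin n → ℝ) := Sum.elim (fun b => if b then x₀ else x) q with hp₁
  set p₂ : Bool ⊕ ι → (Fin n → ℝ) := Sum.elim (fun _ => x₀) q with hp₂
  have hsum1 : ∑ j ∈ t', w₁ j = 1 + ∑ i ∈ t, pos i + ∑ i ∈ t, neg i := by
    simp [ht', hw₁, Finset.sum_sumElim, Fintype.sum_bool]; ring
  have hsum2 : ∑ j ∈ t', w₂ j = 1 + ∑ i ∈ t, pos i + ∑ i ∈ t, neg i := by
    simp [ht', hw₂, Finset.sum_sumElim, Fintype.sum_bool]; ring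
  have hP : 0 ≤ ∑ i ∈ t, pos i := Finset.sum_nonneg fun i _ => hpos0 i
  have hN : 0 ≤ ∑ i ∈ t, neg i := Finset.sum_nonneg fun i _ => hneg0 i
  have hpos' : 0 < ∑ j ∈ t', w₁ j := by rw [hsum1]; linarith
  have key := aff_sum_eq hXc f haff t' w₁ w₂ p₁ p₂
    (by rintro (b | i) hj
        · rcases b <;> simp [hw₁, hP]
        · simpa [hw₁] using hneg0 i)
    (by rintro (b | i) hj
        · rcases b <;> simp [hw₂] <;> linarith
        · simpa [hw₂] using hpos0 i)
    (hsum1.trans hsum2.symm) hpos'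
    (by rintro (b | i) hj
        · rcases b
          · simpa [hp₁] using hx
          · simpa [hp₁] using hx₀
        · simp only [hp₁, Sum.elim_inr]
          exact hq i (by simpa [ht'] using hj))
    (by rintro (b | i) hj
        · simp [hp₂, hx₀]
        · simp only [hp₂, Sum.elim_inr]
          exact hq i (by simpa [ht'] using hj))
    (by simp only [ht', Finset.sum_disjSum, hw₁, hw₂, hp₁, hp₂, Fintype.sum_bool,
          Sum.elim_inl, Sum.elim_inr, Bool.false_eq_true, if_true, if_false]
        rw [hrep, hsplitE q x₀]
        module)
  simp only [ht', Finset.sum_disjSum, hw₁, hw₂, hp₁, hp₂, Fintype.sum_bool,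
    Sum.elim_inl, Sum.elim_inr, Bool.false_eq_true, if_true, if_false] at key
  rw [hsplitF (fun i => f (q i)) (f x₀)]
  linear_combination (norm := module) key


/-- An affine-on-`X` map agrees on `X` with a continuous map. -/
lemma exists_cont_ext (hXc : Convex ℝ X)
    (f : (Fin n → ℝ) → (Fin d → ℝ))
    (haff : ∀ a b : ℝ, 0 ≤ a → 0 ≤ b → a + b = 1 → ∀ x₁ ∈ X, ∀ x₂ ∈ X,
      f (a • x₁ + b • x₂) = a • f x₁ + b • f x₂)
    {x₀ : Fin n → ℝ} (hx₀ : x₀ ∈ X) :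
    ∃ F : (Fin n → ℝ) → (Fin d → ℝ), Continuous F ∧ Set.EqOn f F X := by
  classical
  obtain ⟨bset, hbD, hspan, hli⟩ := exists_linearIndependent ℝ ((fun x => x - x₀) '' X)
  set W := Submodule.span ℝ (Set.range ((↑) : bset → (Fin n → ℝ))) with hW
  have hWspan : W = Submodule.span ℝ ((fun x => x - x₀) '' X) := by
    rw [hW, Subtype.range_coe]; exact hspan
  let B : Module.Basis bset ℝ W := Module.Basis.span hli
  have hwit : ∀ v : bset, ∃ xv ∈ X, xv - x₀ = (v : Fin n → ℝ) := by
    intro v; rcases hbD v.2 with ⟨xv, hxv, hev⟩; exact ⟨xv, hxv, hev⟩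
  choose xw hxwX hxweq using hwit
  let g : W →ₗ[ℝ] (Fin d → ℝ) := B.constr ℝ (fun v => f (xw v) - f x₀)
  obtain ⟨g', hg'⟩ := g.exists_extend
  refine ⟨fun z => f x₀ + g' (z - x₀), ?_, ?_⟩
  · have hc : Continuous g' := g'.continuous_of_finiteDimensional
    exact continuous_const.add (hc.comp (continuous_id.sub continuous_const))
  · intro z hz
    have hzW : z - x₀ ∈ W := by
      rw [hWspan]; exact Submodule.subset_span ⟨z, hz, rfl⟩
    set u : W := ⟨z - x₀, hzW⟩ with hu
    have hgu : g' (z - x₀) = g u := by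
      have := congrArg (fun (h : W →ₗ[ℝ] (Fin d → ℝ)) => h u) hg'
      exact this
    set l := B.repr u with hl
    have hurep : (u : Fin n → ℝ) = ∑ v ∈ l.support, l v • ((v : bset) : Fin n → ℝ) := by
      conv_lhs => rw [← B.linearCombination_repr u]
      rw [Finsupp.linearCombination_apply, Finsupp.sum, ← hl]
      rw [Submodule.coe_sum]
      refine Finset.sum_congr rfl fun v hv => ?_
      rw [SetLike.val_smul]
      congr 1
      exact congrArg Subtype.val (Module.Basis.span_apply hli v)
    have hg_u : g u = ∑ v ∈ l.support, l v • (f (xw v) - f x₀) := by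
      conv_lhs => rw [← B.linearCombination_repr u]
      rw [Finsupp.linearCombination_apply, map_finsuppSum, Finsupp.sum, ← hl]
      refine Finset.sum_congr rfl fun v hv => ?_
      rw [map_smul]
      congr 1
      exact B.constr_basis ℝ (fun v => f (xw v) - f x₀) v
    have hz_rep : z = x₀ + ∑ v ∈ l.support, l v • (xw v - x₀) := by
      have h1 : z - x₀ = ∑ v ∈ l.support, l v • (xw v - x₀) := by
        have : (u : Fin n → ℝ) = z - x₀ := rfl
        rw [← this, hurep]
        exact Finset.sum_congr rfl fun v hv => by rw [hxweq v]
      rw [← h1]; abel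
    have := aff_comb hXc f haff l.support (fun v => l v) xw
      (fun v _ => hxwX v) hz hx₀ hz_rep
    rw [this]
    show f x₀ + _ = f x₀ + g' (z - x₀)
    rw [hgu, hg_u]

end Aux

theorem halfspace_satisfiable_implies_response_satisfiable
    (n m d : ℕ) (X : Set (Fin n → ℝ)) (Y : Set (Fin m → ℝ))
    (hXc : Convex ℝ X) (hXcp : IsCompact X) (hXne : X.Nonempty)
    (hYc : Convex ℝ Y) (hYcp : IsCompact Y) (hYne : Y.Nonempty)
    (ℓ : (Fin n → ℝ) → (Fin m → ℝ) → (Fin d → ℝ))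
    (hbi1 : ∀ a b : ℝ, 0 ≤ a → 0 ≤ b → a + b = 1 →
      ∀ x₁ ∈ X, ∀ x₂ ∈ X, ∀ y ∈ Y,
        ℓ (a • x₁ + b • x₂) y = a • ℓ x₁ y + b • ℓ x₂ y)
    (hbi2 : ∀ a b : ℝ, 0 ≤ a → 0 ≤ b → a + b = 1 →
      ∀ x ∈ X, ∀ y₁ ∈ Y, ∀ y₂ ∈ Y,
        ℓ x (a • y₁ + b • y₂) = a • ℓ x y₁ + b • ℓ x y₂)
    (S : Set (Fin d → ℝ)) (hScl : IsClosed S) (hSconv : Convex ℝ S)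
    (hhalf : ∀ (θ : Fin d → ℝ) (c : ℝ), S ⊆ {z | ∑ i, θ i * z i ≤ c} →
      ∃ x ∈ X, ∀ y ∈ Y, ∑ i, θ i * ℓ x y i ≤ c) :
    ∀ y ∈ Y, ∃ x ∈ X, ℓ x y ∈ S := by
  intro y₀ hy₀
  by_contra hcon
  push_neg at hcon
  set f : (Fin n → ℝ) → (Fin d → ℝ) := fun x => ℓ x y₀ with hf
  have haff : ∀ a b : ℝ, 0 ≤ a → 0 ≤ b → a + b = 1 → ∀ x₁ ∈ X, ∀ x₂ ∈ X,
      f (a • x₁ + b • x₂) = a • f x₁ + b • f x₂ :=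
    fun a b ha hb hab x₁ h1 x₂ h2 => hbi1 a b ha hb hab x₁ h1 x₂ h2 y₀ hy₀
  obtain ⟨x₀, hx₀⟩ := hXne
  obtain ⟨F, hFc, hFeq⟩ := exists_cont_ext hXc f haff hx₀
  have hLcp : IsCompact (f '' X) := by
    rw [Set.image_congr hFeq]
    exact hXcp.image hFc
  have hLconv : Convex ℝ (f '' X) := by
    rintro - ⟨x₁, h1, rfl⟩ - ⟨x₂, h2, rfl⟩ a b ha hb hab
    exact ⟨a • x₁ + b • x₂, hXc h1 h2 ha hb hab, haff a b ha hb hab x₁ h1 x₂ h2⟩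
  have hdisj : Disjoint S (f '' X) := by
    rw [Set.disjoint_left]
    rintro z hzS ⟨x, hxX, rfl⟩
    exact hcon x hxX hzS
  obtain ⟨φ, u, v, hSu, huv, hLv⟩ :=
    geometric_hahn_banach_closed_compact hSconv hScl hLconv hLcp hdisj
  set θ : Fin d → ℝ := fun i => φ (fun j => if i = j then 1 else 0) with hθ
  have hφ : ∀ z : Fin d → ℝ, ∑ i, θ i * z i = φ z := by
    intro z
    rw [show φ z = (φ : (Fin d → ℝ) →ₗ[ℝ] ℝ) z from rfl,
      LinearMap.pi_apply_eq_sum_univ]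
    exact Finset.sum_congr rfl fun i _ => by rw [smul_eq_mul, mul_comm]; rfl
  obtain ⟨x, hxX, hx⟩ := hhalf θ u (fun z hz => by
    simp only [Set.mem_setOf_eq]; rw [hφ]; exact (hSu z hz).le)
  have h1 : φ (ℓ x y₀) ≤ u := by rw [← hφ]; exact hx y₀ hy₀
  have h2 : v < φ (ℓ x y₀) := hLv _ ⟨x, hxX, rfl⟩
  linarith
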